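/- Let f ∈ C²(ℝ^N, ℝ), β ∈ ℝ and α > 1. Suppose x : (0,∞) → ℝ^N is twice differentiable and satisfies, for all t > 0, x″(t) + (α/t) x′(t) + β ∇²f(x(t))·x′(t) = −(1 + β/t) ∇f(x(t)). Define v(t) := x(t) + (t/(α−1))(x′(t) + β ∇f(x(t))). Then for all t > 0, the pair (x, v) satisfies the first-order system x′(t) = ((α−1)/t)(v(t) − x(t)) − β ∇f(x(t)) and v′(t) = −(t/(α−1)) ∇f(x(t)). -/

import Mathlib

/-- If `x` is twice differentiable on `(0,∞)` and solves the
Hessian-driven damping equation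
`x″(t) + (α/t) x′(t) + β ∇²f(x(t))·x′(t) = −(1 + β/t) ∇f(x(t))`, then with
`v(t) := x(t) + (t/(α−1))(x′(t) + β ∇f(x(t)))`, the pair `(x, v)` satisfies the
first-order system `x′(t) = ((α−1)/t)(v(t) − x(t)) − β ∇f(x(t))` and
`v′(t) = −(t/(α−1)) ∇f(x(t))` on `(0,∞)`. -/
theorem hessian_damping_implies_first_order_system
    {N : ℕ}
    (f : EuclideanSpace ℝ (Fin N) → ℝ)
    (f' : EuclideanSpace ℝ (Fin N) → EuclideanSpace ℝ (Fin N))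
    (f'' : EuclideanSpace ℝ (Fin N) →
      (EuclideanSpace ℝ (Fin N) →L[ℝ] EuclideanSpace ℝ (Fin N)))
    (hC2 : ContDiff ℝ 2 f)
    (hf' : ∀ p, HasGradientAt f (f' p) p)
    (hf'' : ∀ p, HasFDerivAt f' (f'' p) p)
    (β α : ℝ) (hα : 1 < α)
    (x x' x'' : ℝ → EuclideanSpace ℝ (Fin N))
    (hx : ∀ t : ℝ, 0 < t → HasDerivAt x (x' t) t)
    (hx' : ∀ t : ℝ, 0 < t → HasDerivAt x' (x'' t) t)
    (heq : ∀ t : ℝ, 0 < t →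
      x'' t + (α / t) • x' t + β • (f'' (x t)) (x' t) = -(1 + β / t) • f' (x t))
    (v : ℝ → EuclideanSpace ℝ (Fin N))
    (hv : ∀ t : ℝ, v t = x t + (t / (α - 1)) • (x' t + β • f' (x t))) :
    ∀ t : ℝ, 0 < t →
      x' t = ((α - 1) / t) • (v t - x t) - β • f' (x t) ∧
      HasDerivAt v (-(t / (α - 1)) • f' (x t)) t := by
  intro t ht
  have hα1 : α - 1 ≠ 0 := by linarith
  have ht0 : t ≠ 0 := ne_of_gt ht
  constructor
  · rw [hv t]
    match_scalars <;> field_simp <;> ring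
  · -- derivative of v
    have hfx : HasDerivAt (fun s => f' (x s)) ((f'' (x t)) (x' t)) t :=
      (hf'' (x t)).comp_hasDerivAt t (hx t ht)
    have hg : HasDerivAt (fun s => x' s + β • f' (x s))
        (x'' t + β • (f'' (x t)) (x' t)) t :=
      (hx' t ht).add (hfx.const_smul β)
    have hc : HasDerivAt (fun s : ℝ => s / (α - 1)) (1 / (α - 1)) t := by
      simpa using (hasDerivAt_id t).div_const (α - 1)
    have hsmul := hc.smul hg
    have hV : HasDerivAt v
        ((1 / (α - 1)) • (x' t + β • f' (x t)) +
          (t / (α - 1)) • (x'' t + β • (f'' (x t)) (x' t)) + x' t) t := by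
      have := ((hx t ht).add hsmul)
      have hveq : v = fun s => x s + (s / (α - 1)) • (x' s + β • f' (x s)) :=
        funext hv
      rw [hveq]
      refine this.congr_deriv ?_
      abel
    have hxx : x'' t = -(1 + β / t) • f' (x t) - (α / t) • x' t -
        β • (f'' (x t)) (x' t) := by
      have := heq t ht
      rw [eq_sub_iff_add_eq, eq_sub_iff_add_eq]
      linear_combination (norm := module) this
    rw [hxx] at hV
    convert hV using 1
    match_scalars <;> field_simp <;> ring
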